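/- Consider the additive group (ℝ,+). For every real number c with c ∉ ℤ, the spectre of the set ℤ ∪ {c} is S(ℤ ∪ {c}) = {0}, while S(ℤ) = ℤ. In particular, taking c_n = 1 − 1/n for n ≥ 2, the sets ℤ ∪ {c_n} converge to ℤ in the Hausdorff distance, but S(ℤ ∪ {c_n}) = {0} does not converge to S(ℤ) = ℤ. -/

import Mathlib

open Filter

/-- The spectre of a set `A` in an abelian group. -/
def spectre {X : Type*} [AddCommGroup X] (A : Set X) : Set X :=
  {z | ∀ x ∈ A, x + z ∈ A ∨ x - z ∈ A}

/-- The set of integers inside `ℝ`. -/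
def intR : Set ℝ := Set.range ((↑) : ℤ → ℝ)

lemma intR_zero : (0 : ℝ) ∈ intR := ⟨0, by norm_num⟩
lemma intR_one : (1 : ℝ) ∈ intR := ⟨1, by norm_num⟩
lemma intR_two : (2 : ℝ) ∈ intR := ⟨2, by norm_num⟩

lemma intR_add {a b : ℝ} (ha : a ∈ intR) (hb : b ∈ intR) : a + b ∈ intR := by
  obtain ⟨m, rfl⟩ := ha; obtain ⟨n, rfl⟩ := hb; exact ⟨m + n, by push_cast; ring⟩

lemma intR_sub {a b : ℝ} (ha : a ∈ intR) (hb : b ∈ intR) : a - b ∈ intR := by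
  obtain ⟨m, rfl⟩ := ha; obtain ⟨n, rfl⟩ := hb; exact ⟨m - n, by push_cast; ring⟩

lemma intR_neg {a : ℝ} (ha : a ∈ intR) : -a ∈ intR := by
  obtain ⟨m, rfl⟩ := ha; exact ⟨-m, by push_cast; ring⟩

lemma spectre_part1 (c : ℝ) (hc : c ∉ intR) : spectre (intR ∪ {c}) = {0} := by
  ext z
  simp only [Set.mem_singleton_iff]
  constructor
  · intro hz
    have h0 := hz 0 (Or.inl intR_zero)
    have hcc := hz c (Or.inr rfl)
    have h2 := hz 2 (Or.inl intR_two)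
    rw [zero_add, zero_sub] at h0
    rcases h0 with (h0 | h0) | (h0 | h0)
    · -- z ∈ intR
      rcases hcc with (h | h) | (h | h)
      · exact absurd (by have := intR_sub h h0; simpa using this) hc
      · simp only [Set.mem_singleton_iff] at h; linarith [h]
      · exact absurd (by have := intR_add h h0; simpa using this) hc
      · simp only [Set.mem_singleton_iff] at h; linarith [h]
    · -- z = c
      simp only [Set.mem_singleton_iff] at h0
      subst h0
      exfalso
      rcases h2 with (h | h) | (h | h)
      · exact hc (by have := intR_sub h intR_two; simpa using this)
      · simp only [Set.mem_singleton_iff] at h; linarith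
      · exact hc (by have := intR_sub intR_two h; simpa using this)
      · simp only [Set.mem_singleton_iff] at h
        exact hc (by rw [show z = 1 by linarith]; exact intR_one)
    · -- -z ∈ intR
      have h0' : z ∈ intR := by have := intR_neg h0; simpa using this
      rcases hcc with (h | h) | (h | h)
      · exact absurd (by have := intR_sub h h0'; simpa using this) hc
      · simp only [Set.mem_singleton_iff] at h; linarith [h]
      · exact absurd (by have := intR_add h h0'; simpa using this) hc
      · simp only [Set.mem_singleton_iff] at h; linarith [h]
    · -- -z = c
      simp only [Set.mem_singleton_iff] at h0
      exfalso
      rcases h2 with (h | h) | (h | h)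
      · refine hc ?_
        have : c = -(2 + z) + 2 := by linarith
        rw [this]; exact intR_add (intR_neg h) intR_two
      · simp only [Set.mem_singleton_iff] at h
        exact hc (by rw [show c = 1 by linarith]; exact intR_one)
      · refine hc ?_
        have : c = (2 - z) - 2 := by linarith
        rw [this]; exact intR_sub h intR_two
      · simp only [Set.mem_singleton_iff] at h; linarith
  · rintro rfl x hx
    left; simpa using hx

lemma spectre_part2 : spectre intR = intR := by
  ext z
  constructor
  · intro hz
    have h0 := hz 0 intR_zero
    rw [zero_add, zero_sub] at h0
    rcases h0 with h | h
    · exact h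
    · have := intR_neg h; simpa using this
  · intro hz x hx
    exact Or.inl (intR_add hx hz)

lemma cn_not_int (n : ℕ) : (1 - 1 / (n + 2 : ℝ)) ∉ intR := by
  rintro ⟨m, hm⟩
  have hn : (0 : ℝ) < (n : ℝ) + 2 := by positivity
  have h1 : (0 : ℝ) < 1 / ((n : ℝ) + 2) := by positivity
  have h2 : 1 / ((n : ℝ) + 2) < 1 := by
    rw [div_lt_one hn]; linarith
  have hm0 : (0 : ℝ) < (m : ℝ) := by rw [hm]; linarith
  have hm1 : (m : ℝ) < 1 := by rw [hm]; linarith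
  have : (0 : ℤ) < m := by exact_mod_cast hm0
  have : m < 1 := by exact_mod_cast hm1
  omega

theorem spectre_int_union_singleton :
    (∀ c : ℝ, c ∉ intR → spectre (intR ∪ {c}) = {0}) ∧
    spectre intR = intR ∧
    Tendsto (fun n : ℕ => EMetric.hausdorffEdist (intR ∪ {1 - 1 / (n + 2 : ℝ)}) intR)
      atTop (nhds 0) ∧
    ¬ Tendsto
      (fun n : ℕ => EMetric.hausdorffEdist (spectre (intR ∪ {1 - 1 / (n + 2 : ℝ)})) (spectre intR))
      atTop (nhds 0) := by
  refine ⟨spectre_part1, spectre_part2, ?_, ?_⟩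
  · -- Hausdorff distance tends to 0
    have hle : ∀ n : ℕ, EMetric.hausdorffEdist (intR ∪ {1 - 1 / (n + 2 : ℝ)}) intR
        ≤ ENNReal.ofReal (1 / (n + 2 : ℝ)) := by
      intro n
      apply EMetric.hausdorffEdist_le_of_infEdist
      · rintro x (hx | hx)
        · rw [EMetric.infEdist_zero_of_mem hx]; exact zero_le
        · simp only [Set.mem_singleton_iff] at hx
          subst hx
          calc EMetric.infEdist (1 - 1 / (n + 2 : ℝ)) intR
              ≤ edist (1 - 1 / (n + 2 : ℝ)) 1 := EMetric.infEdist_le_edist_of_mem intR_one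
            _ = ENNReal.ofReal (1 / (n + 2 : ℝ)) := by
                rw [edist_dist, Real.dist_eq,
                  show (1 - 1 / (n + 2 : ℝ)) - 1 = -(1 / (n + 2 : ℝ)) by ring, abs_neg,
                  abs_of_nonneg (by positivity)]
      · intro x hx
        rw [EMetric.infEdist_zero_of_mem (Set.mem_union_left _ hx)]
        exact zero_le
    have hb' : Tendsto (fun n : ℕ => ((n : ℝ) + 2)⁻¹) atTop (nhds 0) :=
      tendsto_inv_atTop_zero.comp (tendsto_atTop_add_const_right _ 2 tendsto_natCast_atTop_atTop)
    have hb : Tendsto (fun n : ℕ => ENNReal.ofReal (1 / (n + 2 : ℝ))) atTop (nhds 0) := by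
      rw [show (0 : ENNReal) = ENNReal.ofReal 0 by simp]
      exact ENNReal.tendsto_ofReal (hb'.congr fun n => (one_div _).symm)
    refine tendsto_of_tendsto_of_tendsto_of_le_of_le tendsto_const_nhds hb (fun n => zero_le) hle
  · -- non-convergence
    intro h
    have heq : (fun n : ℕ => EMetric.hausdorffEdist
        (spectre (intR ∪ {1 - 1 / (n + 2 : ℝ)})) (spectre intR))
        = fun _ : ℕ => EMetric.hausdorffEdist ({0} : Set ℝ) intR := by
      funext n
      rw [spectre_part1 _ (cn_not_int n), spectre_part2]
    rw [heq] at h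
    have h0 : EMetric.hausdorffEdist ({0} : Set ℝ) intR = 0 :=
      tendsto_nhds_unique tendsto_const_nhds h
    have h2 : EMetric.infEdist (2 : ℝ) ({0} : Set ℝ)
        ≤ EMetric.hausdorffEdist intR ({0} : Set ℝ) :=
      EMetric.infEdist_le_hausdorffEdist_of_mem intR_two
    unfold EMetric.hausdorffEdist at h0 h2
    unfold EMetric.infEdist at h2
    rw [EMetric.hausdorffEdist_comm, h0, EMetric.infEdist_singleton] at h2
    simp only [nonpos_iff_eq_zero, edist_eq_zero] at h2
    norm_num at h2
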